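/- Under Assumptions 1–3 on the model, let π̄ be the consensus distribution. Then the ℓ2-norm of the difference between π̄ and the uniform vector satisfies ‖π̄ − (1/n)e‖₂ ≤ (1/(1−λ₂(T))) · (Σ_{i,j} p_ij α_ij)/n, where λ₂(T) is the second largest eigenvalue of the symmetric matrix T. -/

import Mathlib

open Matrix Filter

noncomputable section

/-- the standard basis vector `e_i`. -/
def eVec {n : ℕ} (i : Fin n) : Fin n → ℝ := fun k => if k = i then 1 else 0

/-- `A_{ij} = I − (e_i−e_j)(e_i−e_j)ᵀ/2` : pairwise averaging matrix. -/
def Amat {n : ℕ} (i j : Fin n) : Matrix (Fin n) (Fin n) ℝ :=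
  1 - (2⁻¹ : ℝ) • Matrix.vecMulVec (eVec i - eVec j) (eVec i - eVec j)

/-- `J_{ij} = I − (1−ε) e_i (e_i−e_j)ᵀ` : influence matrix. -/
def Jmat {n : ℕ} (ε : ℝ) (i j : Fin n) : Matrix (Fin n) (Fin n) ℝ :=
  1 - (1 - ε) • Matrix.vecMulVec (eVec i) (eVec i - eVec j)

/-- the social network matrix `T = (1/n) Σ_{i,j} p_ij [(1−γ_ij) A_ij + γ_ij I]`. -/
def socT {n : ℕ} (p γ : Fin n → Fin n → ℝ) : Matrix (Fin n) (Fin n) ℝ :=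
  ((n : ℝ)⁻¹) • ∑ i, ∑ j, p i j •
    ((1 - γ i j) • Amat i j + γ i j • (1 : Matrix (Fin n) (Fin n) ℝ))

/-- the influence matrix `D = (1/n) Σ_{i,j} p_ij α_ij (J_ij − A_ij)`. -/
def infD {n : ℕ} (p α : Fin n → Fin n → ℝ) (ε : ℝ) : Matrix (Fin n) (Fin n) ℝ :=
  ((n : ℝ)⁻¹) • ∑ i, ∑ j, (p i j * α i j) • (Jmat ε i j - Amat i j)

/-- `isPath E i j L` : there is a directed path of length `L` from `i` to `j`. -/
def isPath {n : ℕ} (E : Fin n → Fin n → Prop) (i j : Fin n) (L : ℕ) : Prop :=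
  ∃ f : ℕ → Fin n, f 0 = i ∧ f L = j ∧ ∀ l < L, E (f l) (f (l + 1))

namespace S7

variable {n : ℕ}

lemma eVec_dot (i : Fin n) (u : Fin n → ℝ) : eVec i ⬝ᵥ u = u i := by
  simp [eVec, dotProduct, ite_mul]

lemma dot_eVec (u : Fin n → ℝ) (i : Fin n) : u ⬝ᵥ eVec i = u i := by
  simp [eVec, dotProduct, mul_ite]

lemma vmv_mulVec (a b u : Fin n → ℝ) : Matrix.vecMulVec a b *ᵥ u = (b ⬝ᵥ u) • a := by
  ext k
  simp only [Matrix.mulVec, dotProduct, Matrix.vecMulVec_apply, Pi.smul_apply, smul_eq_mul]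
  rw [Finset.sum_mul]
  exact Finset.sum_congr rfl fun l _ => by ring

lemma vecMul_vmv (u a b : Fin n → ℝ) : u ᵥ* Matrix.vecMulVec a b = (u ⬝ᵥ a) • b := by
  ext k
  simp only [Matrix.vecMul, dotProduct, Matrix.vecMulVec_apply, Pi.smul_apply, smul_eq_mul]
  rw [Finset.sum_mul]
  exact Finset.sum_congr rfl fun l _ => by ring

lemma sum_mulVec' {ι : Type*} (s : Finset ι) (M : ι → Matrix (Fin n) (Fin n) ℝ) (u : Fin n → ℝ) :
    (∑ t ∈ s, M t) *ᵥ u = ∑ t ∈ s, M t *ᵥ u := by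
  induction s using Finset.cons_induction with
  | empty => simp
  | cons a s ha ih => simp [Finset.sum_cons, Matrix.add_mulVec, ih]

lemma sum_vecMul' {ι : Type*} (s : Finset ι) (M : ι → Matrix (Fin n) (Fin n) ℝ) (u : Fin n → ℝ) :
    u ᵥ* (∑ t ∈ s, M t) = ∑ t ∈ s, u ᵥ* M t := by
  induction s using Finset.cons_induction with
  | empty => simp
  | cons a s ha ih => simp [Finset.sum_cons, Matrix.vecMul_add, ih]

lemma dot_sum {ι : Type*} (s : Finset ι) (u : Fin n → ℝ) (f : ι → Fin n → ℝ) :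
    u ⬝ᵥ (∑ t ∈ s, f t) = ∑ t ∈ s, u ⬝ᵥ f t := by
  induction s using Finset.cons_induction with
  | empty => simp
  | cons a s ha ih => simp [Finset.sum_cons, dotProduct_add, ih]

lemma vecMul_smulM (c : ℝ) (M : Matrix (Fin n) (Fin n) ℝ) (x : Fin n → ℝ) :
    x ᵥ* (c • M) = c • (x ᵥ* M) := by
  ext k
  simp only [Matrix.vecMul, dotProduct, Matrix.smul_apply, Pi.smul_apply, smul_eq_mul,
    Finset.mul_sum]
  exact Finset.sum_congr rfl fun l _ => by ring

lemma Amat_mulVec (i j : Fin n) (u : Fin n → ℝ) :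
    Amat i j *ᵥ u = u - (2⁻¹ * (u i - u j)) • (eVec i - eVec j) := by
  unfold Amat
  rw [Matrix.sub_mulVec, Matrix.one_mulVec, Matrix.smul_mulVec, vmv_mulVec,
    sub_dotProduct, eVec_dot, eVec_dot, smul_smul]

lemma socT_mulVec (p γ : Fin n → Fin n → ℝ) (u : Fin n → ℝ) :
    socT p γ *ᵥ u = (n:ℝ)⁻¹ • ∑ i, ∑ j, p i j • ((1 - γ i j) • (Amat i j *ᵥ u) + γ i j • u) := by
  unfold socT
  rw [Matrix.smul_mulVec, sum_mulVec']
  congr 1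
  refine Finset.sum_congr rfl fun i _ => ?_
  rw [sum_mulVec']
  refine Finset.sum_congr rfl fun j _ => ?_
  rw [Matrix.smul_mulVec, Matrix.add_mulVec, Matrix.smul_mulVec,
    Matrix.smul_mulVec, Matrix.one_mulVec]

lemma socT_one (p γ : Fin n → Fin n → ℝ) (hn : 2 ≤ n) (hp_row : ∀ i, ∑ j, p i j = 1) :
    socT p γ *ᵥ (fun _ => (1:ℝ)) = fun _ => (1:ℝ) := by
  have hn0 : (n:ℝ) ≠ 0 := by positivity
  rw [socT_mulVec]
  have h1 : ∀ i j : Fin n, p i j • ((1 - γ i j) • (Amat i j *ᵥ (fun _ => (1:ℝ)))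
      + γ i j • (fun _ => (1:ℝ))) = p i j • (fun _ => (1:ℝ)) := by
    intro i j
    rw [Amat_mulVec]
    simp only [sub_self, mul_zero, zero_smul, sub_zero]
    rw [← add_smul, sub_add_cancel, one_smul]
  simp only [h1]
  ext k
  simp only [Pi.smul_apply, Finset.sum_apply, smul_eq_mul, mul_one, hp_row]
  simp [hn0]

lemma quadT (p γ : Fin n → Fin n → ℝ) (hn : 2 ≤ n) (hp_row : ∀ i, ∑ j, p i j = 1)
    (u : Fin n → ℝ) :
    u ⬝ᵥ ((1 - socT p γ) *ᵥ u)
      = (n:ℝ)⁻¹ * ∑ i, ∑ j, p i j * (1 - γ i j) * ((u i - u j)^2 / 2) := by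
  have hn0 : (n:ℝ) ≠ 0 := by positivity
  have key : ∀ i j : Fin n, u ⬝ᵥ (p i j • ((1 - γ i j) • (Amat i j *ᵥ u) + γ i j • u))
      = p i j * (u ⬝ᵥ u) - p i j * (1 - γ i j) * ((u i - u j)^2 / 2) := by
    intro i j
    have hA : u ⬝ᵥ (Amat i j *ᵥ u) = u ⬝ᵥ u - (u i - u j)^2 / 2 := by
      rw [Amat_mulVec, dotProduct_sub, dotProduct_smul, dotProduct_sub, dot_eVec, dot_eVec]
      ring_nf
    rw [dotProduct_smul, dotProduct_add, dotProduct_smul, dotProduct_smul, hA]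
    simp only [smul_eq_mul]
    ring
  rw [Matrix.sub_mulVec, Matrix.one_mulVec, dotProduct_sub, socT_mulVec, dotProduct_smul]
  rw [dot_sum]
  simp only [dot_sum, key]
  have hsum : ∑ i : Fin n, ∑ j : Fin n, (p i j * (u ⬝ᵥ u) - p i j * (1 - γ i j) * ((u i - u j)^2/2))
      = (n:ℝ) * (u ⬝ᵥ u) - ∑ i, ∑ j, p i j * (1 - γ i j) * ((u i - u j)^2 / 2) := by
    simp only [Finset.sum_sub_distrib]
    congr 1
    simp only [← Finset.sum_mul, hp_row]
    simp
  rw [hsum]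
  simp only [smul_eq_mul, mul_sub, ← mul_assoc, inv_mul_cancel₀ hn0, one_mul]
  ring

lemma const_of_quad (p γ : Fin n → Fin n → ℝ) (hn : 2 ≤ n)
    (hp_nonneg : ∀ i j, 0 ≤ p i j)
    (hγle : ∀ i j, γ i j ≤ 1)
    (hint : ∀ i j, 0 < p i j → γ i j < 1)
    (hconn : ∀ i j : Fin n, ∃ L, isPath (fun a b => 0 < p a b) i j L)
    (u : Fin n → ℝ)
    (hq : (n:ℝ)⁻¹ * ∑ i, ∑ j, p i j * (1 - γ i j) * ((u i - u j)^2 / 2) = 0) :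
    ∀ i j, u i = u j := by
  have hn0 : (0:ℝ) < (n:ℝ) := by positivity
  have hnz : ∑ i : Fin n, ∑ j : Fin n, p i j * (1 - γ i j) * ((u i - u j)^2 / 2) = 0 := by
    rcases mul_eq_zero.mp hq with h | h
    · exact absurd h (by positivity)
    · exact h
  have hterm : ∀ i j : Fin n, 0 ≤ p i j * (1 - γ i j) * ((u i - u j)^2 / 2) := by
    intro i j
    have h1 := hp_nonneg i j
    have h2 : (0:ℝ) ≤ 1 - γ i j := by linarith [hγle i j]
    exact mul_nonneg (mul_nonneg h1 h2) (by positivity)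
  have hz : ∀ i j : Fin n, p i j * (1 - γ i j) * ((u i - u j)^2 / 2) = 0 := by
    intro i j
    have h1 := (Finset.sum_eq_zero_iff_of_nonneg
      (fun i _ => Finset.sum_nonneg fun j _ => hterm i j)).mp hnz i (Finset.mem_univ i)
    exact (Finset.sum_eq_zero_iff_of_nonneg (fun j _ => hterm i j)).mp h1 j (Finset.mem_univ j)
  have hedge : ∀ i j : Fin n, 0 < p i j → u i = u j := by
    intro i j hp
    have h1 : (1 - γ i j) > 0 := by linarith [hint i j hp]
    have h2 := hz i j
    rcases mul_eq_zero.mp h2 with h | h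
    · rcases mul_eq_zero.mp h with h' | h'
      · exact absurd h' (ne_of_gt hp)
      · exact absurd h' (ne_of_gt h1)
    · have h3 : (u i - u j)^2 = 0 := by linarith
      have h4 := pow_eq_zero_iff (n := 2) (by norm_num) |>.mp h3
      linarith
  intro i j
  obtain ⟨L, f, hf0, hfL, hstep⟩ := hconn i j
  have hall : ∀ l, l ≤ L → u (f 0) = u (f l) := by
    intro l
    induction l with
    | zero => intro _; rfl
    | succ m ih =>
      intro hm
      have h1 := ih (Nat.le_of_succ_le hm)
      have h2 := hedge _ _ (hstep m (Nat.lt_of_succ_le hm))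
      rw [h1, h2]
  rw [← hf0, ← hfL]
  exact hall L le_rfl

lemma infD_vecMul (p α : Fin n → Fin n → ℝ) (ε : ℝ) (π : Fin n → ℝ) :
    π ᵥ* infD p α ε = (n:ℝ)⁻¹ •
      ∑ i, ∑ j, (p i j * α i j * ((ε - 2⁻¹) * π i - 2⁻¹ * π j)) • (eVec i - eVec j) := by
  unfold infD
  rw [vecMul_smulM, sum_vecMul']
  congr 1
  refine Finset.sum_congr rfl fun i _ => ?_
  rw [sum_vecMul']
  refine Finset.sum_congr rfl fun j _ => ?_
  rw [vecMul_smulM]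
  have hJA : Jmat ε i j - Amat i j
      = (2⁻¹ : ℝ) • Matrix.vecMulVec (eVec i - eVec j) (eVec i - eVec j)
        - (1 - ε) • Matrix.vecMulVec (eVec i) (eVec i - eVec j) := by
    unfold Jmat Amat
    exact sub_sub_sub_cancel_left _ _ _
  rw [hJA, Matrix.vecMul_sub, vecMul_smulM, vecMul_smulM, vecMul_vmv, vecMul_vmv,
    dotProduct_sub, dot_eVec, dot_eVec]
  ext k
  simp only [Pi.smul_apply, Pi.sub_apply, smul_eq_mul]
  ring

lemma norm_d (i j : Fin n) (h : i ≠ j) :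
    ∑ k, (eVec i k - eVec j k)^2 = 2 := by
  have hk : ∀ k : Fin n, (eVec i k - eVec j k)^2
      = (if k = i then (1:ℝ) else 0) + (if k = j then 1 else 0) := by
    intro k
    by_cases h1 : k = i <;> by_cases h2 : k = j
    · exact absurd (h1 ▸ h2 ▸ rfl : i = j) h
    all_goals simp [eVec, h1, h2, h, Ne.symm h]
  simp only [hk]
  rw [Finset.sum_add_distrib]
  simp
  norm_num

def LL (n : ℕ) : (Fin n → ℝ) ≃ₗ[ℝ] EuclideanSpace ℝ (Fin n) :=
  (WithLp.linearEquiv 2 ℝ (Fin n → ℝ)).symm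

lemma LL_apply (x : Fin n → ℝ) (k : Fin n) : LL n x k = x k := rfl

lemma innerE (x y : Fin n → ℝ) : inner ℝ (LL n x) (LL n y) = x ⬝ᵥ y := by
  simp [PiLp.inner_apply, LL_apply, dotProduct, RCLike.inner_apply, mul_comm]

lemma normE (x : Fin n → ℝ) : ‖LL n x‖ = Real.sqrt (∑ k, x k ^ 2) := by
  rw [EuclideanSpace.norm_eq]
  congr 1
  exact Finset.sum_congr rfl fun k _ => by rw [LL_apply, Real.norm_eq_abs, sq_abs]

lemma norm_w_le (p α : Fin n → Fin n → ℝ) (ε : ℝ) (π : Fin n → ℝ)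
    (hp_nonneg : ∀ i j, 0 ≤ p i j) (hα : ∀ i j, 0 ≤ α i j)
    (hπ_nonneg : ∀ i, 0 ≤ π i) (hπ_sum : ∑ i, π i = 1)
    (hε0 : 0 < ε) (hε : ε ≤ 1 / 2) :
    ‖LL n (π ᵥ* infD p α ε)‖ ≤ (∑ i, ∑ j, p i j * α i j) / n := by
  rw [infD_vecMul, _root_.map_smul, map_sum]
  simp only [map_sum]
  rw [norm_smul, Real.norm_eq_abs, abs_inv, Nat.abs_cast, div_eq_inv_mul]
  refine mul_le_mul_of_nonneg_left ?_ (by positivity)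
  refine le_trans (norm_sum_le _ _) ?_
  refine Finset.sum_le_sum fun i _ => le_trans (norm_sum_le _ _) ?_
  refine Finset.sum_le_sum fun j _ => ?_
  rcases eq_or_ne i j with hij | hij
  · subst hij
    have h0 : eVec i - eVec i = (0 : Fin n → ℝ) := sub_self _
    rw [h0, smul_zero, map_zero, norm_zero]
    exact mul_nonneg (hp_nonneg i i) (hα i i)
  · rw [_root_.map_smul, norm_smul, Real.norm_eq_abs, normE]
    simp only [Pi.sub_apply]
    rw [norm_d i j hij]
    have hsum_le : π i + π j ≤ 1 := by
      have h1 := Finset.sum_le_sum_of_subset_of_nonneg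
        (Finset.subset_univ ({i, j} : Finset (Fin n))) (fun k _ _ => hπ_nonneg k)
      rw [Finset.sum_pair hij] at h1
      linarith [hπ_sum]
    have hx : |(ε - 2⁻¹) * π i - 2⁻¹ * π j| ≤ 2⁻¹ := by
      rw [abs_le]
      constructor
      · nlinarith [hπ_nonneg i, hπ_nonneg j, mul_nonneg (le_of_lt hε0) (hπ_nonneg i)]
      · nlinarith [hπ_nonneg i, hπ_nonneg j, mul_nonneg (le_of_lt hε0) (hπ_nonneg i)]
    have hsqrt2 : Real.sqrt 2 ≤ 2 := by
      nlinarith [Real.sq_sqrt (by norm_num : (0:ℝ) ≤ 2), Real.sqrt_nonneg 2]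
    have habs : |p i j * α i j * ((ε - 2⁻¹) * π i - 2⁻¹ * π j)|
        = p i j * α i j * |(ε - 2⁻¹) * π i - 2⁻¹ * π j| := by
      rw [abs_mul, abs_of_nonneg (mul_nonneg (hp_nonneg i j) (hα i j))]
    rw [habs]
    have hpa : 0 ≤ p i j * α i j := mul_nonneg (hp_nonneg i j) (hα i j)
    calc p i j * α i j * |(ε - 2⁻¹) * π i - 2⁻¹ * π j| * Real.sqrt 2
        ≤ p i j * α i j * 2⁻¹ * Real.sqrt 2 :=
          mul_le_mul_of_nonneg_right (mul_le_mul_of_nonneg_left hx hpa) (Real.sqrt_nonneg 2)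
      _ ≤ p i j * α i j * 2⁻¹ * 2 :=
          mul_le_mul_of_nonneg_left hsqrt2 (by positivity)
      _ = p i j * α i j := by ring

lemma final_arith (K S' lam2 : ℝ) (hK : 0 ≤ K) (hpos : 0 < 1 - lam2) (hS : 0 ≤ S')
    (hchain : (1 - lam2) * K ^ 2 ≤ S' * K) : K ≤ (1 / (1 - lam2)) * S' := by
  rcases eq_or_lt_of_le hK with hK0 | hK0
  · rw [← hK0]
    positivity
  · have h3 : (1 - lam2) * K ≤ S' := by
      have h4 : (1 - lam2) * K * K ≤ S' * K := by nlinarith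
      exact le_of_mul_le_mul_right h4 hK0
    rw [show (1 / (1 - lam2)) * S' = S' / (1 - lam2) by ring, le_div_iff₀ hpos]
    linarith

lemma herm_vecMul (M : Matrix (Fin n) (Fin n) ℝ) (hM : M.IsHermitian) (x : Fin n → ℝ) :
    x ᵥ* M = M *ᵥ x := by
  have ht : Mᵀ = M := by
    have h := hM
    rw [Matrix.IsHermitian] at h
    conv_lhs => rw [← h]
    ext a b
    simp [Matrix.conjTranspose_apply]
  conv_rhs => rw [← ht]
  rw [Matrix.mulVec_transpose]

end S7

/-- Theorem 6: under Assumptions 1–3, the consensus distribution `π̄` satisfies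
`‖π̄ − (1/n)e‖₂ ≤ (1/(1−λ₂(T))) · (Σ_{i,j} p_ij α_ij)/n`, where `λ₂(T)` is the
second largest eigenvalue of the symmetric social network matrix `T`. -/
theorem stmt_7 {n : ℕ} (hn : 2 ≤ n)
    (p α β γ : Fin n → Fin n → ℝ)
    (hp_diag : ∀ i, p i i = 0) (hp_nonneg : ∀ i j, 0 ≤ p i j) (hp_row : ∀ i, ∑ j, p i j = 1)
    (hconn : ∀ i j : Fin n, ∃ L, isPath (fun a b => 0 < p a b) i j L)
    (hα : ∀ i j, 0 ≤ α i j) (hβ : ∀ i j, 0 ≤ β i j) (hγ : ∀ i j, 0 ≤ γ i j)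
    (habg : ∀ i j, α i j + β i j + γ i j = 1)
    (hint : ∀ i j, 0 < p i j → 0 < β i j + α i j)
    (ε : ℝ) (hε0 : 0 < ε) (hε : ε ≤ 1 / 2)
    -- π̄ : the consensus distribution
    (πbar : Fin n → ℝ) (hπ_nonneg : ∀ i, 0 ≤ πbar i) (hπ_sum : ∑ i, πbar i = 1)
    (hπ_stat : Matrix.vecMul πbar (socT p γ + infD p α ε) = πbar)
    -- T is symmetric (Hermitian over ℝ)
    (hT : (socT p γ).IsHermitian)
    -- λ₂ : the second largest eigenvalue of T (the largest being 1)
    (lam2 : ℝ)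
    (hlam2 : ∃ i0 : Fin n, hT.eigenvalues i0 = 1 ∧ (∀ i, hT.eigenvalues i ≤ 1) ∧
      IsGreatest {x : ℝ | ∃ i : Fin n, i ≠ i0 ∧ hT.eigenvalues i = x} lam2) :
    Real.sqrt (∑ k, (πbar k - 1 / n) ^ 2) ≤
      (1 / (1 - lam2)) * ((∑ i, ∑ j, p i j * α i j) / n) := by
  classical
  obtain ⟨i0, hi0, hle, hmem, hub⟩ := hlam2
  have hn0 : (0:ℝ) < (n:ℝ) := by positivity
  have hnne : (n:ℝ) ≠ 0 := ne_of_gt hn0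
  have hγle : ∀ i j, γ i j ≤ 1 := fun i j => by
    have h1 := hα i j; have h2 := hβ i j; linarith [habg i j]
  have hγlt : ∀ i j, 0 < p i j → γ i j < 1 := fun i j hp => by
    linarith [hint i j hp, habg i j]
  -- any eigenvector of T with eigenvalue 1 is constant
  have hconst : ∀ u : Fin n → ℝ, socT p γ *ᵥ u = u → ∀ i j, u i = u j := by
    intro u hu
    have h0 : u ⬝ᵥ ((1 - socT p γ) *ᵥ u) = 0 := by
      rw [Matrix.sub_mulVec, Matrix.one_mulVec, hu, sub_self, dotProduct_zero]
    rw [S7.quadT p γ hn hp_row u] at h0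
    exact S7.const_of_quad p γ hn hp_nonneg hγle hγlt hconn u h0
  have hT1 : socT p γ *ᵥ (fun _ => (1:ℝ)) = fun _ => (1:ℝ) := S7.socT_one p γ hn hp_row
  have hsymm : ∀ x : Fin n → ℝ, x ᵥ* socT p γ = socT p γ *ᵥ x := S7.herm_vecMul _ hT
  -- the centered vector and the perturbation vector
  set v : Fin n → ℝ := fun k => πbar k - 1 / n with hvdef
  set w : Fin n → ℝ := πbar ᵥ* infD p α ε with hwdef
  have hv_sum : ∑ k, v k = 0 := by
    simp only [hvdef, Finset.sum_sub_distrib, hπ_sum, Finset.sum_const, Finset.card_univ,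
      Fintype.card_fin, nsmul_eq_mul]
    field_simp
    norm_num
  -- stationarity rearrangement : v (1 - T) = w
  have heq : v ᵥ* (1 - socT p γ) = w := by
    have hπT : πbar ᵥ* socT p γ = πbar - w := by
      rw [Matrix.vecMul_add] at hπ_stat
      exact eq_sub_of_add_eq hπ_stat
    have hv : v = πbar - (fun _ => (1:ℝ)/n) := by funext k; simp [hvdef]
    have hq1 : (fun _ => (1:ℝ)/n : Fin n → ℝ) ᵥ* socT p γ = fun _ => (1:ℝ)/n := by
      have h2 : (fun _ => (1:ℝ)/n : Fin n → ℝ) = ((1:ℝ)/n) • (fun _ => (1:ℝ)) := by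
        funext k; simp
      rw [h2, Matrix.smul_vecMul, hsymm, hT1]
    have h3 : v ᵥ* socT p γ = (πbar - w) - (fun _ => (1:ℝ)/n) := by
      rw [hv, Matrix.sub_vecMul, hq1, hπT]
    rw [Matrix.vecMul_sub, Matrix.vecMul_one, h3, hv]
    abel
  -- spectral setup
  set B := hT.eigenvectorBasis with hBdef
  set lam := hT.eigenvalues with hlamdef
  have hBval : ∀ i, socT p γ *ᵥ ⇑(B i) = lam i • ⇑(B i) := fun i =>
    hT.mulVec_eigenvectorBasis i
  set c : Fin n → ℝ := fun i => inner ℝ (S7.LL n v) (B i) with hcdef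
  have hLLB : ∀ i, S7.LL n ⇑(B i) = B i := fun i => rfl
  have hcdot : ∀ i, c i = v ⬝ᵥ ⇑(B i) := by
    intro i
    show inner ℝ (S7.LL n v) (B i) = v ⬝ᵥ ⇑(B i)
    exact S7.innerE v ⇑(B i)
  have k0 : Fin n := ⟨0, by omega⟩
  -- eigenvector for eigenvalue 1 is constant, so `c i0 = 0`
  have hconst_dot : ∀ u : Fin n → ℝ, (∀ k l, u k = u l) → v ⬝ᵥ u = 0 := by
    intro u hu
    have : v ⬝ᵥ u = ∑ k, v k * u k0 := by
      unfold dotProduct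
      exact Finset.sum_congr rfl fun k _ => by rw [hu k k0]
    rw [this, ← Finset.sum_mul, hv_sum, zero_mul]
  have hc0 : c i0 = 0 := by
    rw [hcdot]
    refine hconst_dot _ (hconst _ ?_)
    rw [hBval, hi0, one_smul]
  -- lam2 < 1
  have hBnorm : ∀ i, ‖B i‖ = 1 := fun i => B.orthonormal.1 i
  have hBne0 : ∀ i, ∃ k, ⇑(B i) k ≠ 0 := by
    intro i
    by_contra h
    push_neg at h
    have h1 : ‖B i‖ = 0 := by
      rw [← hLLB i, S7.normE]
      simp [h]
    rw [hBnorm i] at h1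
    norm_num at h1
  have hlt : lam2 < 1 := by
    obtain ⟨i1, hne, he⟩ := hmem
    have h1 : lam2 ≤ 1 := he ▸ hle i1
    rcases lt_or_eq_of_le h1 with h | h
    · exact h
    · exfalso
      have hB1 : ∀ k l, ⇑(B i1) k = ⇑(B i1) l := by
        refine hconst _ ?_
        rw [hBval, he, h, one_smul]
      have hB0 : ∀ k l, ⇑(B i0) k = ⇑(B i0) l := by
        refine hconst _ ?_
        rw [hBval, hi0, one_smul]
      have horth : inner ℝ (B i0) (B i1) = 0 := B.orthonormal.2 (Ne.symm hne)
      have hdot : ⇑(B i0) ⬝ᵥ ⇑(B i1) = 0 :=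
        (S7.innerE ⇑(B i0) ⇑(B i1)).symm.trans horth
      have hdot2 : ⇑(B i0) ⬝ᵥ ⇑(B i1) = (n:ℝ) * (⇑(B i0) k0 * ⇑(B i1) k0) := by
        unfold dotProduct
        rw [Finset.sum_congr rfl fun k _ => by rw [hB0 k k0, hB1 k k0]]
        simp [Finset.sum_const, Finset.card_univ, mul_comm]
      rw [hdot2] at hdot
      rcases mul_eq_zero.mp hdot with h' | h'
      · exact hnne h'
      rcases mul_eq_zero.mp h' with h'' | h''
      · obtain ⟨k, hk⟩ := hBne0 i0
        exact hk ((hB0 k k0).trans h'')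
      · obtain ⟨k, hk⟩ := hBne0 i1
        exact hk ((hB1 k k0).trans h'')
  have hpos : (0:ℝ) < 1 - lam2 := by linarith
  -- spectral expansion
  have hnormsq : ∑ i, c i * c i = ‖S7.LL n v‖ ^ 2 := by
    have h := B.sum_inner_mul_inner (S7.LL n v) (S7.LL n v)
    have h2 : ∀ i, inner ℝ (B i) (S7.LL n v) = c i := fun i => real_inner_comm _ _
    simp only [h2] at h
    rw [h, real_inner_self_eq_norm_sq]
  have hvv : v ⬝ᵥ v = ∑ i, c i * c i := by
    rw [hnormsq, ← real_inner_self_eq_norm_sq, S7.innerE]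
  have hTquad : v ⬝ᵥ (socT p γ *ᵥ v) = ∑ i, c i * (lam i * c i) := by
    have h := B.sum_inner_mul_inner (S7.LL n v) (S7.LL n (socT p γ *ᵥ v))
    have h2 : ∀ i, inner ℝ (B i) (S7.LL n (socT p γ *ᵥ v)) = lam i * c i := by
      intro i
      have e1 : inner ℝ (B i) (S7.LL n (socT p γ *ᵥ v)) = ⇑(B i) ⬝ᵥ (socT p γ *ᵥ v) :=
        S7.innerE ⇑(B i) (socT p γ *ᵥ v)
      rw [e1, dotProduct_mulVec, hsymm, hBval, smul_dotProduct, smul_eq_mul]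
      congr 1
    simp only [h2] at h
    rw [← S7.innerE, h]
  have key : (1 - lam2) * ‖S7.LL n v‖ ^ 2 ≤ v ⬝ᵥ ((1 - socT p γ) *ᵥ v) := by
    rw [Matrix.sub_mulVec, Matrix.one_mulVec, dotProduct_sub, hTquad, hvv, ← hnormsq,
      Finset.mul_sum, ← Finset.sum_sub_distrib]
    refine Finset.sum_le_sum fun i _ => ?_
    rcases eq_or_ne i i0 with h | h
    · rw [h, hc0]; simp
    · have h1 : lam i ≤ lam2 := hub ⟨i, h, rfl⟩
      nlinarith [mul_self_nonneg (c i)]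
  -- Cauchy-Schwarz
  have hCS : v ⬝ᵥ ((1 - socT p γ) *ᵥ v) ≤ ‖S7.LL n w‖ * ‖S7.LL n v‖ := by
    rw [dotProduct_mulVec, heq, ← S7.innerE]
    exact real_inner_le_norm _ _
  -- norm bound on w
  set S : ℝ := ∑ i, ∑ j, p i j * α i j with hSdef
  have hS0 : 0 ≤ S := Finset.sum_nonneg fun i _ => Finset.sum_nonneg fun j _ =>
    mul_nonneg (hp_nonneg i j) (hα i j)
  have hwb : ‖S7.LL n w‖ ≤ S / n := by
    rw [hwdef, hSdef]
    exact S7.norm_w_le p α ε πbar hp_nonneg hα hπ_nonneg hπ_sum hε0 hε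
  -- final arithmetic
  have hKnn : 0 ≤ ‖S7.LL n v‖ := norm_nonneg _
  have hgoal : Real.sqrt (∑ k, (πbar k - 1 / n) ^ 2) = ‖S7.LL n v‖ :=
    (S7.normE v).symm
  rw [hgoal]
  have hchain : (1 - lam2) * ‖S7.LL n v‖ ^ 2 ≤ (S / n) * ‖S7.LL n v‖ :=
    le_trans key (le_trans hCS (mul_le_mul_of_nonneg_right hwb hKnn))
  exact S7.final_arith _ _ _ hKnn hpos (by positivity) hchain
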